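/- arXiv:0912.0336 — 2 statements merged into one kernel-verified Lean document; each statement's English description precedes it below -/
import Mathlib

section
/- For every complex m×n matrix A and vectors x ∈ ℂⁿ, y ∈ ℂᵐ, one has |⟨Ax, y⟩| ≤ 16·‖x‖_∞·‖y‖_∞·‖A‖_□·m·n. -/
open Matrix Finset

/-- The cut-norm of a complex `m × n` matrix:
`max_{X ⊆ [m], Y ⊆ [n]} |Σ(A[X,Y])| / (mn)`. -/
noncomputable def cutNorm {m n : ℕ} (A : Matrix (Fin m) (Fin n) ℂ) : ℝ :=
  Finset.univ.sup' Finset.univ_nonempty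
    (fun p : Finset (Fin m) × Finset (Fin n) =>
      ‖∑ i ∈ p.1, ∑ j ∈ p.2, A i j‖ / (m * n))

lemma seg (z w : ℂ) (c : ℝ) (h0 : 0 ≤ c) (h1 : c ≤ 1) :
    ‖z + c * w‖ ≤ max (‖z‖) (‖z + w‖) := by
  have key : z + (c : ℂ) * w = (1 - c) • z + c • (z + w) := by
    simp [Complex.real_smul]; push_cast; ring
  rw [key]
  calc ‖(1 - c) • z + c • (z + w)‖ ≤ ‖(1 - c) • z‖ + ‖c • (z + w)‖ := norm_add_le _ _
    _ = (1 - c) * ‖z‖ + c * ‖z + w‖ := by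
        rw [norm_smul, norm_smul, Real.norm_eq_abs, Real.norm_eq_abs,
          abs_of_nonneg (by linarith), abs_of_nonneg h0]
    _ ≤ (1 - c) * max ‖z‖ ‖z + w‖ + c * max ‖z‖ ‖z + w‖ := by
        exact add_le_add (mul_le_mul_of_nonneg_left (le_max_left _ _) (by linarith))
          (mul_le_mul_of_nonneg_left (le_max_right _ _) h0)
    _ = max ‖z‖ ‖z + w‖ := by ring

/-- Extreme point lemma: a sum with coefficients in `[0,1]` is dominated by a
subset sum. -/
lemma extreme {ι : Type*} (s : Finset ι) (u : ι → ℝ) (w : ι → ℂ)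
    (hu0 : ∀ i, 0 ≤ u i) (hu1 : ∀ i, u i ≤ 1) (z : ℂ) :
    ∃ t ⊆ s, ‖z + ∑ i ∈ s, u i * w i‖ ≤ ‖z + ∑ i ∈ t, w i‖ := by
  induction s using Finset.cons_induction generalizing z with
  | empty => exact ⟨∅, Finset.Subset.refl _, by simp⟩
  | cons a s ha ih =>
    rw [Finset.sum_cons]
    have e1 : z + ((u a : ℂ) * w a + ∑ i ∈ s, u i * w i) =
        (z + ∑ i ∈ s, u i * w i) + (u a : ℝ) * w a := by push_cast; ring
    have e2 : (z + ∑ i ∈ s, u i * w i) + w a = (z + w a) + ∑ i ∈ s, u i * w i := by ring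
    have hseg : ‖z + ((u a : ℂ) * w a + ∑ i ∈ s, u i * w i)‖ ≤
        max (‖z + ∑ i ∈ s, u i * w i‖)
            (‖(z + w a) + ∑ i ∈ s, u i * w i‖) := by
      rw [e1, ← e2]
      exact seg (z + ∑ i ∈ s, u i * w i) (w a) (u a) (hu0 a) (hu1 a)
    rcases le_max_iff.mp hseg with h | h
    · obtain ⟨t, hts, hle⟩ := ih z
      exact ⟨t, hts.trans (Finset.subset_cons ha), h.trans hle⟩
    · obtain ⟨t, hts, hle⟩ := ih (z + w a)
      refine ⟨Finset.cons a t (fun hat => ha (hts hat)), Finset.cons_subset_cons.mpr hts, ?_⟩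
      rw [Finset.sum_cons]
      calc ‖z + ((u a : ℂ) * w a + ∑ i ∈ s, u i * w i)‖ ≤
            ‖z + w a + ∑ i ∈ t, w i‖ := h.trans hle
        _ = ‖z + (w a + ∑ i ∈ t, w i)‖ := by ring_nf

/-- Real coefficients in `[0,1]` over `univ`. -/
lemma bound01 {k : ℕ} (u : Fin k → ℝ) (w : Fin k → ℂ)
    (hu0 : ∀ i, 0 ≤ u i) (hu1 : ∀ i, u i ≤ 1) (B : ℝ)
    (hB : ∀ t : Finset (Fin k), ‖∑ i ∈ t, w i‖ ≤ B) :
    ‖∑ i, (u i : ℂ) * w i‖ ≤ B := by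
  obtain ⟨t, -, hle⟩ := extreme Finset.univ u w hu0 hu1 0
  simpa using hle.trans (by simpa using hB t)

/-- Real coefficients in `[-1,1]`. -/
lemma bound11 {k : ℕ} (u : Fin k → ℝ) (w : Fin k → ℂ)
    (hu : ∀ i, |u i| ≤ 1) (B : ℝ)
    (hB : ∀ t : Finset (Fin k), ‖∑ i ∈ t, w i‖ ≤ B) :
    ‖∑ i, (u i : ℂ) * w i‖ ≤ 2 * B := by
  have key : (∑ i, (u i : ℂ) * w i) =
      (∑ i, ((max (u i) 0 : ℝ) : ℂ) * w i) - (∑ i, ((max (-u i) 0 : ℝ) : ℂ) * w i) := by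
    rw [← Finset.sum_sub_distrib]
    congr 1; ext i
    have : (u i : ℂ) = ((max (u i) 0 : ℝ) : ℂ) - ((max (-u i) 0 : ℝ) : ℂ) := by
      push_cast
      rcases le_total (u i) 0 with h | h
      · rw [max_eq_right h, max_eq_left (by linarith)]; push_cast; ring
      · rw [max_eq_left h, max_eq_right (by linarith)]; push_cast; ring
    rw [this]; ring
  rw [key]
  have h1 : ‖∑ i, ((max (u i) 0 : ℝ) : ℂ) * w i‖ ≤ B :=
    bound01 _ w (fun i => le_max_right _ _)
      (fun i => max_le (le_of_abs_le (hu i)) zero_le_one) B hB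
  have h2 : ‖∑ i, ((max (-u i) 0 : ℝ) : ℂ) * w i‖ ≤ B :=
    bound01 _ w (fun i => le_max_right _ _)
      (fun i => max_le (by have := neg_abs_le (u i); linarith [abs_le.mp (hu i)]) zero_le_one) B hB
  calc ‖∑ i, ((max (u i) 0 : ℝ) : ℂ) * w i - ∑ i, ((max (-u i) 0 : ℝ) : ℂ) * w i‖
      = ‖∑ i, ((max (u i) 0 : ℝ) : ℂ) * w i - ∑ i, ((max (-u i) 0 : ℝ) : ℂ) * w i‖ :=
        rfl
    _ ≤ ‖∑ i, ((max (u i) 0 : ℝ) : ℂ) * w i‖ + ‖∑ i, ((max (-u i) 0 : ℝ) : ℂ) * w i‖ :=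
        norm_sub_le _ _
    _ ≤ 2 * B := by linarith

/-- Complex coefficients with `‖u i‖ ≤ 1`. -/
lemma boundC1 {k : ℕ} (u : Fin k → ℂ) (w : Fin k → ℂ)
    (hu : ∀ i, ‖u i‖ ≤ 1) (B : ℝ)
    (hB : ∀ t : Finset (Fin k), ‖∑ i ∈ t, w i‖ ≤ B) :
    ‖∑ i, u i * w i‖ ≤ 4 * B := by
  have key : (∑ i, u i * w i) =
      (∑ i, ((u i).re : ℂ) * w i) + Complex.I * ∑ i, ((u i).im : ℂ) * w i := by
    rw [Finset.mul_sum, ← Finset.sum_add_distrib]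
    congr 1; ext i
    calc u i * w i = (((u i).re : ℂ) + ((u i).im : ℂ) * Complex.I) * w i := by
          rw [Complex.re_add_im]
      _ = ((u i).re : ℂ) * w i + Complex.I * (((u i).im : ℂ) * w i) := by ring
  rw [key]
  have h1 : ‖∑ i, ((u i).re : ℂ) * w i‖ ≤ 2 * B :=
    bound11 _ w (fun i => (Complex.abs_re_le_norm (u i)).trans (hu i)) B hB
  have h2 : ‖∑ i, ((u i).im : ℂ) * w i‖ ≤ 2 * B :=
    bound11 _ w (fun i => (Complex.abs_im_le_norm (u i)).trans (hu i)) B hB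
  calc ‖_ + Complex.I * _‖
      ≤ ‖∑ i, ((u i).re : ℂ) * w i‖
        + ‖Complex.I * ∑ i, ((u i).im : ℂ) * w i‖ := norm_add_le _ _
    _ = ‖∑ i, ((u i).re : ℂ) * w i‖
        + ‖∑ i, ((u i).im : ℂ) * w i‖ := by rw [norm_mul, Complex.norm_I, one_mul]
    _ ≤ 4 * B := by linarith

/-- Complex coefficients with `‖u i‖ ≤ c`. -/
lemma boundC {k : ℕ} (u : Fin k → ℂ) (w : Fin k → ℂ) (c : ℝ) (hc0 : 0 ≤ c)
    (hu : ∀ i, ‖u i‖ ≤ c) (B : ℝ)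
    (hB : ∀ t : Finset (Fin k), ‖∑ i ∈ t, w i‖ ≤ B) :
    ‖∑ i, u i * w i‖ ≤ 4 * c * B := by
  have hB0 : 0 ≤ B := le_trans (by simp) (hB ∅)
  rcases eq_or_lt_of_le hc0 with hc | hc
  · have hz : (∑ i, u i * w i) = 0 := Finset.sum_eq_zero fun i _ => by
      have : ‖u i‖ = 0 := le_antisymm (by rw [hc]; exact hu i) (norm_nonneg _)
      rw [norm_eq_zero] at this
      rw [this, zero_mul]
    rw [hz, norm_zero, ← hc]
    simp
  · have key : (∑ i, u i * w i) = (c : ℂ) * ∑ i, (u i / c) * w i := by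
      rw [Finset.mul_sum]; congr 1; ext i
      have hcne : (c : ℂ) ≠ 0 := by exact_mod_cast hc.ne'
      field_simp
    rw [key, norm_mul, Complex.norm_real, Real.norm_eq_abs, abs_of_pos hc]
    have := boundC1 (fun i => u i / c) w (fun i => by
      rw [norm_div, Complex.norm_real, Real.norm_eq_abs, abs_of_pos hc, div_le_one hc]; exact hu i) B hB
    calc c * ‖∑ i, u i / c * w i‖ ≤ c * (4 * B) := by
          exact mul_le_mul_of_nonneg_left this hc.le
      _ = 4 * c * B := by ring

/-- For a complex `m × n` matrix `A` and complex vectors `x`, `y`,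
`|⟨Ax, y⟩| ≤ 16 ‖x‖_∞ ‖y‖_∞ ‖A‖_□ m n`, where `⟨·,·⟩` is the Hermitian
inner product.  (The norm on `Fin k → ℂ` is the sup-norm.) -/
theorem abs_inner_mulVec_le_sixteen_cutNorm {m n : ℕ} (A : Matrix (Fin m) (Fin n) ℂ)
    (x : Fin n → ℂ) (y : Fin m → ℂ) :
    ‖∑ i, (starRingEnd ℂ) (y i) * A.mulVec x i‖ ≤
      16 * ‖x‖ * ‖y‖ * cutNorm A * m * n := by
  have hA : ∀ (S : Finset (Fin m)) (T : Finset (Fin n)),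
      ‖∑ i ∈ S, ∑ j ∈ T, A i j‖ ≤ cutNorm A * m * n := by
    intro S T
    rcases Nat.eq_zero_or_pos m with hm | hm
    · subst hm
      have hS : S = ∅ := Finset.eq_empty_of_isEmpty S
      simp [hS]
    rcases Nat.eq_zero_or_pos n with hn | hn
    · subst hn
      have hT : T = ∅ := Finset.eq_empty_of_isEmpty T
      simp [hT]
    have hmn : (0:ℝ) < (m:ℝ) * n := by positivity
    have hle : ‖∑ i ∈ S, ∑ j ∈ T, A i j‖ / ((m:ℝ) * n) ≤ cutNorm A :=
      Finset.le_sup' (f := fun p : Finset (Fin m) × Finset (Fin n) =>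
        ‖∑ i ∈ p.1, ∑ j ∈ p.2, A i j‖ / (m * n)) (Finset.mem_univ (S, T))
    rw [div_le_iff₀ hmn] at hle
    calc ‖∑ i ∈ S, ∑ j ∈ T, A i j‖ ≤ cutNorm A * ((m:ℝ) * n) := hle
      _ = cutNorm A * m * n := by ring
  have hx : ∀ j, ‖x j‖ ≤ ‖x‖ := fun j => by
    exact norm_le_pi_norm x j
  have hy : ∀ i, ‖(starRingEnd ℂ) (y i)‖ ≤ ‖y‖ := fun i => by
    rw [Complex.norm_conj]; exact norm_le_pi_norm y i
  have hw : ∀ S : Finset (Fin m),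
      ‖∑ i ∈ S, A.mulVec x i‖ ≤ 4 * ‖x‖ * (cutNorm A * m * n) := by
    intro S
    have e : ∑ i ∈ S, A.mulVec x i = ∑ j, x j * (∑ i ∈ S, A i j) := by
      simp only [Matrix.mulVec, dotProduct]
      rw [Finset.sum_comm]
      refine Finset.sum_congr rfl fun j _ => ?_
      rw [Finset.mul_sum]
      exact Finset.sum_congr rfl fun i _ => mul_comm _ _
    rw [e]
    exact boundC x (fun j => ∑ i ∈ S, A i j) ‖x‖ (norm_nonneg x) hx _ (fun T => by
      rw [Finset.sum_comm]; exact hA S T)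
  calc ‖∑ i, (starRingEnd ℂ) (y i) * A.mulVec x i‖
      ≤ 4 * ‖y‖ * (4 * ‖x‖ * (cutNorm A * m * n)) :=
        boundC (fun i => (starRingEnd ℂ) (y i)) (A.mulVec x) ‖y‖ (norm_nonneg y) hy _ hw
    _ = 16 * ‖x‖ * ‖y‖ * cutNorm A * m * n := by ring
end

section
/- For every complex m×n matrix A, the largest singular value satisfies σ₁(A) ≤ 4·√(|A|_∞·‖A‖_□·m·n), where |A|_∞ = max_{i,j}|a_{ij}|. -/
open Matrix Finset

/-- `|A|_∞ = max_{i,j} |a_{ij}|`. -/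
noncomputable def supAbs {m n : ℕ} (A : Matrix (Fin m) (Fin n) ℂ) : ℝ :=
  ⨆ i, ⨆ j, ‖A i j‖

/-- `f` rearranged in decreasing order. -/
noncomputable def sortDesc {N : ℕ} (f : Fin N → ℝ) : Fin N → ℝ :=
  fun i => f (Tuple.sort f i.rev)

/-- The singular values `σ₁(A) ≥ σ₂(A) ≥ ⋯` of `A` (0-indexed). -/
noncomputable def singVal {m n : ℕ} (A : Matrix (Fin m) (Fin n) ℂ) (i : ℕ) : ℝ :=
  if h : i < n then
    Real.sqrt (sortDesc (Matrix.isHermitian_conjTranspose_mul_self A).eigenvalues ⟨i, h⟩)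
  else 0

lemma abs_sum_coeff_le {ι : Type*} (s : Finset ι) (c : ι → ℂ) (p : ι → ℝ)
    (hp0 : ∀ i, 0 ≤ p i) (hp1 : ∀ i, p i ≤ 1) :
    ∃ t : Finset ι, t ⊆ s ∧
      ‖∑ i ∈ s, (p i : ℂ) * c i‖ ≤ ‖∑ i ∈ t, c i‖ := by
  set z := ∑ i ∈ s, (p i : ℂ) * c i with hz
  rcases eq_or_ne z 0 with h0 | h0
  · exact ⟨∅, Finset.empty_subset s, by simp [h0]⟩
  · have habs : (0:ℝ) < ‖z‖ := by
      simpa [norm_pos_iff] using h0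
    set w : ℂ := (starRingEnd ℂ) z / (‖z‖ : ℂ) with hw
    have hwz : (w * z).re = ‖z‖ := by
      have : w * z = (‖z‖ : ℂ) := by
        rw [hw, div_mul_eq_mul_div, ← Complex.normSq_eq_conj_mul_self,
          Complex.normSq_eq_norm_sq]
        push_cast
        rw [sq, mul_div_assoc, div_self (by exact_mod_cast habs.ne'), mul_one]
      rw [this, Complex.ofReal_re]
    have hwabs : ‖w‖ = 1 := by
      rw [hw]
      simp [norm_div, Complex.norm_conj, habs.ne']
    refine ⟨s.filter (fun i => 0 ≤ (w * c i).re), Finset.filter_subset _ _, ?_⟩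
    calc ‖z‖ = (w * z).re := hwz.symm
      _ = ∑ i ∈ s, p i * (w * c i).re := by
          rw [hz, Finset.mul_sum, Complex.re_sum]
          refine Finset.sum_congr rfl fun i _ => ?_
          have : w * ((p i : ℂ) * c i) = (p i : ℂ) * (w * c i) := by ring
          rw [this, Complex.re_ofReal_mul]
      _ ≤ ∑ i ∈ s, (if 0 ≤ (w * c i).re then (w * c i).re else 0) := by
          refine Finset.sum_le_sum fun i _ => ?_
          by_cases hi : 0 ≤ (w * c i).re
          · simp only [if_pos hi]
            nlinarith [hp0 i, hp1 i]
          · simp only [if_neg hi]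
            nlinarith [hp0 i, hp1 i, not_le.mp hi]
      _ = ∑ i ∈ s.filter (fun i => 0 ≤ (w * c i).re), (w * c i).re :=
          (Finset.sum_filter _ _).symm
      _ = (w * ∑ i ∈ s.filter (fun i => 0 ≤ (w * c i).re), c i).re := by
          rw [Finset.mul_sum, Complex.re_sum]
      _ ≤ ‖w * ∑ i ∈ s.filter (fun i => 0 ≤ (w * c i).re), c i‖ :=
          Complex.re_le_norm _
      _ = ‖∑ i ∈ s.filter (fun i => 0 ≤ (w * c i).re), c i‖ := by
          rw [norm_mul, hwabs, one_mul]
open Matrix Finset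

lemma cutNorm_nonneg {m n : ℕ} (A : Matrix (Fin m) (Fin n) ℂ) : 0 ≤ cutNorm A := by
  refine le_trans ?_ (Finset.le_sup' (f := fun p : Finset (Fin m) × Finset (Fin n) =>
      ‖∑ i ∈ p.1, ∑ j ∈ p.2, A i j‖ / (m * n))
      (b := ((∅ : Finset (Fin m)), (∅ : Finset (Fin n)))) (Finset.mem_univ _))
  simp

lemma abs_subsum_le_cut {m n : ℕ} (A : Matrix (Fin m) (Fin n) ℂ)
    (S : Finset (Fin m)) (T : Finset (Fin n)) :
    ‖∑ i ∈ S, ∑ j ∈ T, A i j‖ ≤ cutNorm A * m * n := by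
  rcases Nat.eq_zero_or_pos m with hm | hm
  · subst hm
    have : S = ∅ := Finset.eq_empty_of_isEmpty S
    simp [this]
  rcases Nat.eq_zero_or_pos n with hn | hn
  · subst hn
    have : T = ∅ := Finset.eq_empty_of_isEmpty T
    simp [this]
  have hmn : (0:ℝ) < (m:ℝ) * n := by positivity
  have h := Finset.le_sup' (f := fun p : Finset (Fin m) × Finset (Fin n) =>
      ‖∑ i ∈ p.1, ∑ j ∈ p.2, A i j‖ / (m * n))
      (b := (S, T)) (Finset.mem_univ _)
  simp only at h
  rw [div_le_iff₀ hmn] at h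
  calc ‖∑ i ∈ S, ∑ j ∈ T, A i j‖ ≤ cutNorm A * ((m:ℝ) * n) := h
    _ = cutNorm A * m * n := by ring
lemma abs_sum_pq_le {m n : ℕ} (A : Matrix (Fin m) (Fin n) ℂ)
    (p : Fin m → ℝ) (q : Fin n → ℝ)
    (hp0 : ∀ i, 0 ≤ p i) (hp1 : ∀ i, p i ≤ 1)
    (hq0 : ∀ j, 0 ≤ q j) (hq1 : ∀ j, q j ≤ 1) :
    ‖∑ i, ∑ j, (p i : ℂ) * (q j : ℂ) * A i j‖ ≤ cutNorm A * m * n := by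
  have h1 : (∑ i, ∑ j, (p i : ℂ) * (q j : ℂ) * A i j)
      = ∑ i, (p i : ℂ) * (∑ j, (q j : ℂ) * A i j) := by
    refine Finset.sum_congr rfl fun i _ => ?_
    rw [Finset.mul_sum]
    exact Finset.sum_congr rfl fun j _ => by ring
  rw [h1]
  obtain ⟨S, -, hS⟩ := abs_sum_coeff_le Finset.univ
    (fun i => ∑ j, (q j : ℂ) * A i j) p hp0 hp1
  refine hS.trans ?_
  have h2 : (∑ i ∈ S, ∑ j, (q j : ℂ) * A i j)
      = ∑ j, (q j : ℂ) * (∑ i ∈ S, A i j) := by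
    rw [Finset.sum_comm]
    refine Finset.sum_congr rfl fun j _ => ?_
    rw [Finset.mul_sum]
  rw [h2]
  obtain ⟨T, -, hT⟩ := abs_sum_coeff_le Finset.univ
    (fun j => ∑ i ∈ S, A i j) q hq0 hq1
  refine hT.trans ?_
  rw [Finset.sum_comm]
  exact abs_subsum_le_cut A S T

lemma abs_sum_wz_le {m n : ℕ} (A : Matrix (Fin m) (Fin n) ℂ)
    (w : Fin m → ℝ) (z : Fin n → ℝ)
    (hw : ∀ i, |w i| ≤ 1) (hz : ∀ j, |z j| ≤ 1) :
    ‖∑ i, ∑ j, (w i : ℂ) * (z j : ℂ) * A i j‖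
      ≤ 4 * (cutNorm A * m * n) := by
  set a : Fin m → ℝ := fun i => max (w i) 0 with ha
  set b : Fin m → ℝ := fun i => max (-w i) 0 with hb
  set c : Fin n → ℝ := fun j => max (z j) 0 with hc
  set d : Fin n → ℝ := fun j => max (-z j) 0 with hd
  have ha0 : ∀ i, 0 ≤ a i := fun i => le_max_right _ _
  have hb0 : ∀ i, 0 ≤ b i := fun i => le_max_right _ _
  have hc0 : ∀ j, 0 ≤ c j := fun j => le_max_right _ _
  have hd0 : ∀ j, 0 ≤ d j := fun j => le_max_right _ _
  have ha1 : ∀ i, a i ≤ 1 := fun i => max_le (le_trans (le_abs_self _) (hw i)) zero_le_one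
  have hb1 : ∀ i, b i ≤ 1 := fun i => max_le (le_trans (neg_le_abs _) (hw i)) zero_le_one
  have hc1 : ∀ j, c j ≤ 1 := fun j => max_le (le_trans (le_abs_self _) (hz j)) zero_le_one
  have hd1 : ∀ j, d j ≤ 1 := fun j => max_le (le_trans (neg_le_abs _) (hz j)) zero_le_one
  have hab : ∀ i, (w i : ℂ) = (a i : ℂ) - (b i : ℂ) := by
    intro i
    rw [← Complex.ofReal_sub]
    norm_cast
    rw [ha, hb]
    simp [max_zero_sub_max_neg_zero_eq_self]
  have hcd : ∀ j, (z j : ℂ) = (c j : ℂ) - (d j : ℂ) := by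
    intro j
    rw [← Complex.ofReal_sub]
    norm_cast
    rw [hc, hd]
    simp [max_zero_sub_max_neg_zero_eq_self]
  have key : (∑ i, ∑ j, (w i : ℂ) * (z j : ℂ) * A i j)
      = (∑ i, ∑ j, (a i : ℂ) * (c j : ℂ) * A i j)
        - (∑ i, ∑ j, (a i : ℂ) * (d j : ℂ) * A i j)
        - (∑ i, ∑ j, (b i : ℂ) * (c j : ℂ) * A i j)
        + (∑ i, ∑ j, (b i : ℂ) * (d j : ℂ) * A i j) := by
    have hterm : ∀ i j, (w i : ℂ) * (z j : ℂ) * A i j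
        = (a i : ℂ) * (c j : ℂ) * A i j - (a i : ℂ) * (d j : ℂ) * A i j
          - (b i : ℂ) * (c j : ℂ) * A i j + (b i : ℂ) * (d j : ℂ) * A i j := by
      intro i j
      rw [hab i, hcd j]
      ring
    simp_rw [hterm, Finset.sum_add_distrib, Finset.sum_sub_distrib]
  rw [key]
  have t1 := abs_sum_pq_le A a c ha0 ha1 hc0 hc1
  have t2 := abs_sum_pq_le A a d ha0 ha1 hd0 hd1
  have t3 := abs_sum_pq_le A b c hb0 hb1 hc0 hc1
  have t4 := abs_sum_pq_le A b d hb0 hb1 hd0 hd1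
  have e1 := norm_add_le
    ((∑ i, ∑ j, (a i : ℂ) * (c j : ℂ) * A i j)
        - (∑ i, ∑ j, (a i : ℂ) * (d j : ℂ) * A i j)
        - (∑ i, ∑ j, (b i : ℂ) * (c j : ℂ) * A i j))
    (∑ i, ∑ j, (b i : ℂ) * (d j : ℂ) * A i j)
  have e2 := norm_sub_le
    ((∑ i, ∑ j, (a i : ℂ) * (c j : ℂ) * A i j)
        - (∑ i, ∑ j, (a i : ℂ) * (d j : ℂ) * A i j))
    (∑ i, ∑ j, (b i : ℂ) * (c j : ℂ) * A i j)
  have e3 := norm_sub_le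
    (∑ i, ∑ j, (a i : ℂ) * (c j : ℂ) * A i j)
    (∑ i, ∑ j, (a i : ℂ) * (d j : ℂ) * A i j)
  have hcut : 0 ≤ cutNorm A * m * n := by
    have := cutNorm_nonneg A
    positivity
  linarith

lemma abs_sum_xy_le {m n : ℕ} (A : Matrix (Fin m) (Fin n) ℂ)
    (x : Fin m → ℂ) (y : Fin n → ℂ)
    (hx : ∀ i, ‖x i‖ ≤ 1) (hy : ∀ j, ‖y j‖ ≤ 1) :
    ‖∑ i, ∑ j, x i * A i j * y j‖ ≤ 16 * (cutNorm A * m * n) := by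
  have hterm : ∀ i j, x i * A i j * y j
      = ((x i).re : ℂ) * ((y j).re : ℂ) * A i j
        - ((x i).im : ℂ) * ((y j).im : ℂ) * A i j
        + Complex.I * (((x i).re : ℂ) * ((y j).im : ℂ) * A i j)
        + Complex.I * (((x i).im : ℂ) * ((y j).re : ℂ) * A i j) := by
    intro i j
    have hx' : x i = ((x i).re : ℂ) + ((x i).im : ℂ) * Complex.I := (Complex.re_add_im _).symm
    have hy' : y j = ((y j).re : ℂ) + ((y j).im : ℂ) * Complex.I := (Complex.re_add_im _).symm
    conv_lhs => rw [hx', hy']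
    linear_combination (((x i).im : ℂ) * ((y j).im : ℂ) * A i j) * Complex.I_sq
  have key : (∑ i, ∑ j, x i * A i j * y j)
      = (∑ i, ∑ j, ((x i).re : ℂ) * ((y j).re : ℂ) * A i j)
        - (∑ i, ∑ j, ((x i).im : ℂ) * ((y j).im : ℂ) * A i j)
        + Complex.I * (∑ i, ∑ j, ((x i).re : ℂ) * ((y j).im : ℂ) * A i j)
        + Complex.I * (∑ i, ∑ j, ((x i).im : ℂ) * ((y j).re : ℂ) * A i j) := by
    simp_rw [hterm, Finset.sum_add_distrib, Finset.sum_sub_distrib, ← Finset.mul_sum]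
  have hre : ∀ i : Fin m, |(x i).re| ≤ 1 := fun i => (Complex.abs_re_le_norm _).trans (hx i)
  have him : ∀ i : Fin m, |(x i).im| ≤ 1 := fun i => (Complex.abs_im_le_norm _).trans (hx i)
  have hre' : ∀ j : Fin n, |(y j).re| ≤ 1 := fun j => (Complex.abs_re_le_norm _).trans (hy j)
  have him' : ∀ j : Fin n, |(y j).im| ≤ 1 := fun j => (Complex.abs_im_le_norm _).trans (hy j)
  have t1 := abs_sum_wz_le A (fun i => (x i).re) (fun j => (y j).re) hre hre'
  have t2 := abs_sum_wz_le A (fun i => (x i).im) (fun j => (y j).im) him him'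
  have t3 := abs_sum_wz_le A (fun i => (x i).re) (fun j => (y j).im) hre him'
  have t4 := abs_sum_wz_le A (fun i => (x i).im) (fun j => (y j).re) him hre'
  rw [key]
  have e1 := norm_add_le
    ((∑ i, ∑ j, ((x i).re : ℂ) * ((y j).re : ℂ) * A i j)
        - (∑ i, ∑ j, ((x i).im : ℂ) * ((y j).im : ℂ) * A i j)
        + Complex.I * (∑ i, ∑ j, ((x i).re : ℂ) * ((y j).im : ℂ) * A i j))
    (Complex.I * (∑ i, ∑ j, ((x i).im : ℂ) * ((y j).re : ℂ) * A i j))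
  have e2 := norm_add_le
    ((∑ i, ∑ j, ((x i).re : ℂ) * ((y j).re : ℂ) * A i j)
        - (∑ i, ∑ j, ((x i).im : ℂ) * ((y j).im : ℂ) * A i j))
    (Complex.I * (∑ i, ∑ j, ((x i).re : ℂ) * ((y j).im : ℂ) * A i j))
  have e3 := norm_sub_le
    (∑ i, ∑ j, ((x i).re : ℂ) * ((y j).re : ℂ) * A i j)
    (∑ i, ∑ j, ((x i).im : ℂ) * ((y j).im : ℂ) * A i j)
  have eI1 : ‖Complex.I * (∑ i, ∑ j, ((x i).re : ℂ) * ((y j).im : ℂ) * A i j)‖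
      = ‖∑ i, ∑ j, ((x i).re : ℂ) * ((y j).im : ℂ) * A i j‖ := by
    rw [norm_mul, Complex.norm_I, one_mul]
  have eI2 : ‖Complex.I * (∑ i, ∑ j, ((x i).im : ℂ) * ((y j).re : ℂ) * A i j)‖
      = ‖∑ i, ∑ j, ((x i).im : ℂ) * ((y j).re : ℂ) * A i j‖ := by
    rw [norm_mul, Complex.norm_I, one_mul]
  rw [eI1] at e2
  rw [eI2] at e1
  linarith

lemma supAbs' {m n : ℕ} (A : Matrix (Fin m) (Fin n) ℂ) (i : Fin m) (j : Fin n) :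
    ‖A i j‖ ≤ (⨆ i, ⨆ j, ‖A i j‖) := by
  have h1 : ‖A i j‖ ≤ ⨆ j, ‖A i j‖ :=
    le_ciSup (f := fun j => ‖A i j‖)
      (Set.Finite.bddAbove (Set.finite_range _)) j
  exact h1.trans (le_ciSup (f := fun i => ⨆ j, ‖A i j‖)
    (Set.Finite.bddAbove (Set.finite_range _)) i)

lemma supAbs_nonneg' {m n : ℕ} (A : Matrix (Fin m) (Fin n) ℂ) :
    0 ≤ (⨆ i, ⨆ j, ‖A i j‖) := by
  rcases Nat.eq_zero_or_pos m with hm | hm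
  · subst hm
    simp [Real.iSup_of_isEmpty]
  rcases Nat.eq_zero_or_pos n with hn | hn
  · subst hn
    simp [Real.iSup_of_isEmpty]
  exact le_trans (norm_nonneg (A ⟨0, hm⟩ ⟨0, hn⟩)) (supAbs' A ⟨0, hm⟩ ⟨0, hn⟩)

theorem singVal_aux {m n : ℕ} (A : Matrix (Fin m) (Fin n) ℂ) :
    (if h : 0 < n then
      Real.sqrt (sortDesc (Matrix.isHermitian_conjTranspose_mul_self A).eigenvalues ⟨0, h⟩)
    else 0) ≤ 4 * Real.sqrt ((⨆ i, ⨆ j, ‖A i j‖) * cutNorm A * m * n) := by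
  split_ifs with h
  · set hM := Matrix.isHermitian_conjTranspose_mul_self A with hMdef
    set k := Tuple.sort hM.eigenvalues (Fin.rev (⟨0, h⟩ : Fin n)) with hk
    have hsd : sortDesc hM.eigenvalues ⟨0, h⟩ = hM.eigenvalues k := rfl
    rw [hsd]
    set lam := hM.eigenvalues k with hlamdef
    have hlam0 : 0 ≤ lam := Matrix.eigenvalues_conjTranspose_mul_self_nonneg A k
    set v : Fin n → ℂ := ⇑(hM.eigenvectorBasis k) with hvdef
    have hvne : v ≠ 0 := by
      intro hcon
      exact hM.eigenvectorBasis.orthonormal.ne_zero k (by ext t; exact congrFun hcon t)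
    have heig : (Aᴴ * A) *ᵥ v = lam • v := hM.mulVec_eigenvectorBasis k
    obtain ⟨j₀, -, hj₀⟩ := Finset.exists_max_image (Finset.univ : Finset (Fin n))
      (fun j => ‖v j‖) ⟨⟨0, h⟩, Finset.mem_univ _⟩
    set r := ‖v j₀‖ with hr
    have hrpos : 0 < r := by
      obtain ⟨j1, hj1⟩ := Function.ne_iff.mp hvne
      have hpos : 0 < ‖v j1‖ := by
        simpa [norm_pos_iff] using hj1
      exact lt_of_lt_of_le hpos (hj₀ j1 (Finset.mem_univ _))
    set u := A *ᵥ v with hu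
    set α := ⨆ i, ⨆ j, ‖A i j‖ with hα
    have hα0 : 0 ≤ α := supAbs_nonneg' A
    set C := cutNorm A with hC
    have hC0 : 0 ≤ C := cutNorm_nonneg A
    have h1 : lam * r ≤ α * ∑ i, ‖u i‖ := by
      have e1 : ((Aᴴ * A) *ᵥ v) j₀ = ∑ i, (starRingEnd ℂ) (A i j₀) * u i := by
        rw [hu, ← Matrix.mulVec_mulVec]
        simp [Matrix.mulVec, dotProduct, Matrix.conjTranspose_apply]
      have e2 : ((Aᴴ * A) *ᵥ v) j₀ = (lam : ℂ) * v j₀ := by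
        rw [heig]
        simp [Pi.smul_apply, Complex.real_smul]
      have e3 : ‖(lam : ℂ) * v j₀‖ = lam * r := by
        rw [norm_mul, Complex.norm_real, Real.norm_eq_abs, _root_.abs_of_nonneg hlam0]
      calc lam * r = ‖∑ i, (starRingEnd ℂ) (A i j₀) * u i‖ := by
            rw [← e1, e2, e3]
        _ ≤ ∑ i, ‖(starRingEnd ℂ) (A i j₀) * u i‖ :=
            norm_sum_le _ _
        _ ≤ ∑ i, α * ‖u i‖ := by
            refine Finset.sum_le_sum fun i _ => ?_
            rw [norm_mul, Complex.norm_conj]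
            exact mul_le_mul_of_nonneg_right (supAbs' A i j₀) (norm_nonneg _)
        _ = α * ∑ i, ‖u i‖ := (Finset.mul_sum _ _ _).symm
    have h2 : ∑ i, ‖u i‖ ≤ 16 * (C * m * n) * r := by
      set x : Fin m → ℂ := fun i =>
        if u i = 0 then 0 else (starRingEnd ℂ) (u i) / (‖u i‖ : ℂ) with hx
      have hx1 : ∀ i, ‖x i‖ ≤ 1 := by
        intro i
        rw [hx]
        dsimp only
        split_ifs with h'
        · simp
        · have : ‖u i‖ ≠ 0 := by simpa [norm_ne_zero_iff] using h'
          rw [norm_div, Complex.norm_conj, Complex.norm_real, Real.norm_eq_abs,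
            _root_.abs_of_nonneg (norm_nonneg _), div_self this]
      have hxu : ∀ i, x i * u i = (‖u i‖ : ℂ) := by
        intro i
        rw [hx]
        dsimp only
        split_ifs with h'
        · simp [h']
        · have hne : (‖u i‖ : ℂ) ≠ 0 := by
            simpa [Complex.ofReal_ne_zero, norm_ne_zero_iff] using h'
          rw [div_mul_eq_mul_div, ← Complex.normSq_eq_conj_mul_self, Complex.normSq_eq_norm_sq]
          push_cast
          rw [sq, mul_div_assoc, div_self hne, mul_one]
      set y : Fin n → ℂ := fun j => v j / (r : ℂ) with hy
      have hy1 : ∀ j, ‖y j‖ ≤ 1 := by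
        intro j
        rw [hy]
        dsimp only
        rw [norm_div, Complex.norm_real, Real.norm_eq_abs, _root_.abs_of_nonneg hrpos.le, div_le_one hrpos]
        exact hj₀ j (Finset.mem_univ _)
      have hmain := abs_sum_xy_le A x y hx1 hy1
      have e4 : (∑ i, ∑ j, x i * A i j * y j) = ((∑ i, ‖u i‖ : ℝ) : ℂ) / (r : ℂ) := by
        have e5 : ∀ i, (∑ j, x i * A i j * y j) = x i * u i / (r : ℂ) := by
          intro i
          have : ∀ j, x i * A i j * y j = x i * (A i j * v j) / (r : ℂ) := by
            intro j
            rw [hy]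
            dsimp only
            ring
          rw [Finset.sum_congr rfl fun j _ => this j, ← Finset.sum_div, ← Finset.mul_sum]
          have hui : u i = ∑ j, A i j * v j := by
            rw [hu]
            simp [Matrix.mulVec, dotProduct]
          rw [hui]
        rw [Finset.sum_congr rfl fun i _ => e5 i, ← Finset.sum_div]
        congr 1
        push_cast
        exact Finset.sum_congr rfl fun i _ => hxu i
      rw [e4] at hmain
      have hrne : (r : ℝ) ≠ 0 := hrpos.ne'
      have e6 : ‖((∑ i, ‖u i‖ : ℝ) : ℂ) / (r : ℂ)‖
          = (∑ i, ‖u i‖) / r := by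
        rw [norm_div, Complex.norm_real, Real.norm_eq_abs, Complex.norm_real, Real.norm_eq_abs,
          _root_.abs_of_nonneg (Finset.sum_nonneg fun i _ => norm_nonneg _),
          _root_.abs_of_nonneg hrpos.le]
      rw [e6, div_le_iff₀ hrpos] at hmain
      exact hmain
    have hfinal : lam ≤ 16 * (α * C * m * n) := by
      have h3 : lam * r ≤ α * (16 * (C * m * n) * r) :=
        h1.trans (mul_le_mul_of_nonneg_left h2 hα0)
      nlinarith [hrpos]
    calc Real.sqrt lam ≤ Real.sqrt (16 * (α * C * ↑m * ↑n)) := by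
          apply Real.sqrt_le_sqrt
          calc lam ≤ 16 * (α * C * m * n) := hfinal
            _ = 16 * (α * C * ↑m * ↑n) := by push_cast; ring
      _ = 4 * Real.sqrt (α * C * ↑m * ↑n) := by
          rw [show (16 : ℝ) = 4 ^ 2 by norm_num,
            Real.sqrt_mul (by positivity) (α * C * ↑m * ↑n),
            Real.sqrt_sq (by norm_num : (0:ℝ) ≤ 4)]
  · positivity


/-- For every complex `m × n` matrix, `σ₁(A) ≤ 4 √(|A|_∞ ‖A‖_□ m n)`. -/
theorem singVal_one_le_cutNorm_complex {m n : ℕ} (A : Matrix (Fin m) (Fin n) ℂ) :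
    singVal A 0 ≤ 4 * Real.sqrt (supAbs A * cutNorm A * m * n) := by
  exact singVal_aux A
end
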